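/- For every integer p ≥ 2, the function ξ_p(β) := m_*(β,p) is continuous and strictly increasing on the open interval (β*(p), ∞), and lim_{β→∞} ξ_p(β) = 1. -/

import Mathlib

open Real Set Filter
open Topology

/-- `I(x) = ½[(1+x)log(1+x) + (1−x)log(1−x)]` (with `Real.log 0 = 0`). -/
noncomputable def bahI (x : ℝ) : ℝ :=
  ((1 + x) * Real.log (1 + x) + (1 - x) * Real.log (1 - x)) / 2

/-- `H_{β,p}(x) = β xᵖ − I(x)`. -/
noncomputable def bahH (β : ℝ) (p : ℕ) (x : ℝ) : ℝ := β * x ^ p - bahI x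

/-- `β*(p) = sup {β ≥ 0 : sup_{x∈[−1,1]} H_{β,p}(x) = 0}`. -/
noncomputable def betaStar (p : ℕ) : ℝ :=
  sSup {β : ℝ | 0 ≤ β ∧ sSup (bahH β p '' Set.Icc (-1 : ℝ) 1) = 0}

noncomputable def myA (x : ℝ) : ℝ := (Real.log (1 + x) - Real.log (1 - x)) / 2

lemma continuous_bahI : Continuous bahI := by
  have h1 : Continuous fun x : ℝ => (1 + x) * Real.log (1 + x) :=
    Real.continuous_mul_log.comp (continuous_const.add continuous_id)
  have h2 : Continuous fun x : ℝ => (1 - x) * Real.log (1 - x) :=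
    Real.continuous_mul_log.comp (continuous_const.sub continuous_id)
  exact (h1.add h2).div_const 2

lemma continuous_bahH (β : ℝ) (p : ℕ) : Continuous (bahH β p) :=
  (continuous_const.mul (continuous_pow p)).sub continuous_bahI

lemma bahI_zero : bahI 0 = 0 := by simp [bahI]

lemma bahI_one : bahI 1 = Real.log 2 := by
  simp [bahI]
  ring

lemma bahI_nonneg {x : ℝ} (hx : x ∈ Set.Icc (-1:ℝ) 1) : 0 ≤ bahI x := by
  obtain ⟨h1, h2⟩ := hx
  have hc := Real.convexOn_mul_log.2 (mem_Ici.2 (by linarith : (0:ℝ) ≤ 1 + x))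
    (mem_Ici.2 (by linarith : (0:ℝ) ≤ 1 - x)) (by norm_num : (0:ℝ) ≤ 1/2)
    (by norm_num : (0:ℝ) ≤ 1/2) (by norm_num)
  simp only [smul_eq_mul] at hc
  have : (1/2 : ℝ) * (1 + x) + 1/2 * (1 - x) = 1 := by ring
  rw [this] at hc
  simp only [Real.log_one, mul_zero, one_mul] at hc
  unfold bahI
  linarith

lemma bahI_le_log_two {x : ℝ} (hx : x ∈ Set.Icc (-1:ℝ) 1) : bahI x ≤ Real.log 2 := by
  obtain ⟨h1, h2⟩ := hx
  have e1 : (1 + x) * Real.log (1 + x) ≤ (1 + x) * Real.log 2 := by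
    rcases eq_or_lt_of_le (by linarith : (0:ℝ) ≤ 1 + x) with h | h
    · rw [← h]; simp
    · exact mul_le_mul_of_nonneg_left (Real.log_le_log (by positivity) (by linarith)) (by linarith)
  have e2 : (1 - x) * Real.log (1 - x) ≤ (1 - x) * Real.log 2 := by
    rcases eq_or_lt_of_le (by linarith : (0:ℝ) ≤ 1 - x) with h | h
    · rw [← h]; simp
    · exact mul_le_mul_of_nonneg_left (Real.log_le_log (by positivity) (by linarith)) (by linarith)
  unfold bahI
  have : ((1+x) * Real.log 2 + (1-x) * Real.log 2)/2 = Real.log 2 := by ring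
  linarith [ (by linarith : (1 + x) * Real.log (1 + x) + (1 - x) * Real.log (1 - x) ≤ ((1+x) + (1-x)) * Real.log 2) ]

lemma hasDerivAt_bahI {x : ℝ} (h1 : -1 < x) (h2 : x < 1) : HasDerivAt bahI (myA x) x := by
  have hp1 : (0:ℝ) < 1 + x := by linarith
  have hp2 : (0:ℝ) < 1 - x := by linarith
  have d1 : HasDerivAt (fun x : ℝ => (1 + x) * Real.log (1 + x)) (Real.log (1 + x) + 1) x := by
    have ha : HasDerivAt (fun x : ℝ => 1 + x) 1 x := (hasDerivAt_id x).const_add 1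
    have hl : HasDerivAt (fun x : ℝ => Real.log (1 + x)) (1/(1+x)) x := by
      simpa [Function.comp_def] using (Real.hasDerivAt_log hp1.ne').comp x ha
    have := ha.fun_mul hl
    refine this.congr_deriv ?_
    field_simp
  have d2 : HasDerivAt (fun x : ℝ => (1 - x) * Real.log (1 - x)) (-Real.log (1 - x) - 1) x := by
    have ha : HasDerivAt (fun x : ℝ => 1 - x) (-1) x := (hasDerivAt_id x).const_sub 1
    have hl : HasDerivAt (fun x : ℝ => Real.log (1 - x)) (-(1/(1-x))) x := by
      simpa [Function.comp_def] using (Real.hasDerivAt_log hp2.ne').comp x ha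
    have := ha.fun_mul hl
    refine this.congr_deriv ?_
    field_simp
    ring
  have := (d1.fun_add d2).div_const 2
  refine this.congr_deriv ?_
  unfold myA
  ring

lemma hasDerivAt_bahH (β : ℝ) (p : ℕ) {x : ℝ} (h1 : -1 < x) (h2 : x < 1) :
    HasDerivAt (bahH β p) (β * (p * x ^ (p - 1)) - myA x) x :=
  ((hasDerivAt_pow p x).const_mul β).sub (hasDerivAt_bahI h1 h2)

lemma myA_lt_myA {u v : ℝ} (hu : -1 < u) (huv : u < v) (hv : v < 1) : myA u < myA v := by
  have l1 : Real.log (1 + u) < Real.log (1 + v) :=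
    Real.log_lt_log (by linarith) (by linarith)
  have l2 : Real.log (1 - v) < Real.log (1 - u) :=
    Real.log_lt_log (by linarith) (by linarith)
  unfold myA; linarith

lemma exists_myA_large (C : ℝ) : ∃ x₀ : ℝ, 0 < x₀ ∧ x₀ < 1 ∧ C < myA x₀ := by
  set δ : ℝ := Real.exp (-(2*|C| + 1)) with hδ
  have hδpos : 0 < δ := Real.exp_pos _
  have hδlt : δ < 1 := by
    rw [hδ]
    exact Real.exp_lt_one_iff.2 (by nlinarith [abs_nonneg C])
  refine ⟨1 - δ, by linarith, by linarith, ?_⟩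
  have e1 : myA (1 - δ) = (Real.log (2 - δ) - Real.log δ) / 2 := by
    unfold myA; ring_nf
  have l1 : (0:ℝ) ≤ Real.log (2 - δ) := Real.log_nonneg (by linarith)
  have l2 : Real.log δ = -(2*|C| + 1) := Real.log_exp _
  rw [e1, l2]
  have := le_abs_self C
  linarith

noncomputable def psiF (q : ℕ) (x : ℝ) : ℝ := x / (1 - x^2) - q * myA x

lemma psiF_zero (q : ℕ) : psiF q 0 = 0 := by simp [psiF, myA]

lemma hasDerivAt_myA {x : ℝ} (h1 : -1 < x) (h2 : x < 1) :
    HasDerivAt myA (1/(1-x^2)) x := by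
  have hp1 : (0:ℝ) < 1 + x := by linarith
  have hp2 : (0:ℝ) < 1 - x := by linarith
  have d1 : HasDerivAt (fun x : ℝ => Real.log (1 + x)) (1/(1+x)) x := by
    simpa [Function.comp_def] using (Real.hasDerivAt_log hp1.ne').comp x ((hasDerivAt_id x).const_add 1)
  have d2 : HasDerivAt (fun x : ℝ => Real.log (1 - x)) (-(1/(1-x))) x := by
    simpa [Function.comp_def] using (Real.hasDerivAt_log hp2.ne').comp x ((hasDerivAt_id x).const_sub 1)
  have := (d1.fun_sub d2).div_const 2
  refine this.congr_deriv ?_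
  have hne3 : 1 - x^2 ≠ 0 := by nlinarith
  field_simp
  ring

lemma hasDerivAt_psiF (q : ℕ) {x : ℝ} (h1 : -1 < x) (h2 : x < 1) :
    HasDerivAt (psiF q) ((((q:ℝ)+1) * x^2 + (1 - q)) / (1-x^2)^2) x := by
  have hne : (1 - x^2) ≠ 0 := by nlinarith
  have d1 : HasDerivAt (fun x : ℝ => x / (1 - x^2)) ((1 + x^2)/(1-x^2)^2) x := by
    have hb : HasDerivAt (fun x : ℝ => 1 - x^2) (-(2*x)) x := by
      simpa using ((hasDerivAt_pow 2 x).const_sub 1)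
    have := (hasDerivAt_id x).fun_div hb hne
    refine this.congr_deriv ?_
    field_simp
    simp only [id]
    ring
  have d2 : HasDerivAt (fun x : ℝ => (q:ℝ) * myA x) ((q:ℝ) * (1/(1-x^2))) x :=
    (hasDerivAt_myA h1 h2).const_mul _
  have := d1.fun_sub d2
  refine this.congr_deriv ?_
  field_simp
  ring

lemma psiF_pos {q : ℕ} (hq : 1 ≤ q) {u v : ℝ} (hu : 0 < u) (huv : u < v) (hv : v < 1)
    (hψu : 0 ≤ psiF q u) : 0 < psiF q v := by
  have huv1 : u < 1 := huv.trans hv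
  -- first : (q:ℝ) - 1 < (q+1) * u^2
  have key : (q:ℝ) - 1 < ((q:ℝ)+1) * u^2 := by
    by_contra hcon
    push_neg at hcon
    have hanti : StrictAntiOn (psiF q) (Set.Icc 0 u) := by
      apply strictAntiOn_of_deriv_neg (convex_Icc 0 u)
      · intro y hy
        exact ((hasDerivAt_psiF q (by cases hy; linarith) (by cases hy; linarith)).continuousAt).continuousWithinAt
      · intro y hy
        rw [interior_Icc] at hy
        obtain ⟨hy1, hy2⟩ := hy
        rw [(hasDerivAt_psiF q (by linarith) (by linarith)).deriv]
        have hcast : (1:ℝ) ≤ q := by exact_mod_cast hq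
        have hy2' : y^2 < u^2 := by nlinarith
        have hy1' : y^2 < 1 := by nlinarith
        apply div_neg_of_neg_of_pos
        · nlinarith
        · exact pow_pos (by linarith) 2
    have := hanti (Set.left_mem_Icc.2 hu.le) (Set.right_mem_Icc.2 hu.le) hu
    rw [psiF_zero] at this
    linarith
  have hmono : StrictMonoOn (psiF q) (Set.Icc u v) := by
    apply strictMonoOn_of_deriv_pos (convex_Icc u v)
    · intro y hy
      exact ((hasDerivAt_psiF q (by cases hy; linarith) (by cases hy; linarith)).continuousAt).continuousWithinAt
    · intro y hy
      rw [interior_Icc] at hy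
      obtain ⟨hy1, hy2⟩ := hy
      rw [(hasDerivAt_psiF q (by linarith) (by linarith)).deriv]
      have hcast : (1:ℝ) ≤ q := by exact_mod_cast hq
      have hy2' : u^2 < y^2 := by nlinarith
      have hy1' : y^2 < 1 := by nlinarith
      apply div_pos
      · nlinarith
      · exact pow_pos (by linarith) 2
  have := hmono (Set.left_mem_Icc.2 huv.le) (Set.right_mem_Icc.2 huv.le) huv
  linarith

noncomputable def phiF (q : ℕ) (x : ℝ) : ℝ := myA x / x^q

lemma hasDerivAt_phiF {q : ℕ} (hq : 1 ≤ q) {x : ℝ} (h0 : 0 < x) (h1 : x < 1) :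
    HasDerivAt (phiF q) (psiF q x / x^(q+1)) x := by
  obtain ⟨q', rfl⟩ : ∃ q', q = q' + 1 := ⟨q - 1, (Nat.succ_pred_eq_of_pos hq).symm⟩
  have hxne : x ≠ 0 := h0.ne'
  have hne2 : (1 - x^2) ≠ 0 := by nlinarith
  have hd := (hasDerivAt_myA (by linarith) h1).fun_div (hasDerivAt_pow (q'+1) x)
    (pow_ne_zero _ hxne)
  refine hd.congr_deriv ?_
  simp only [Nat.add_sub_cancel, psiF]
  set A := myA x with hA
  field_simp
  ring

lemma crit_eq {p : ℕ} {β m : ℝ} (hm0 : -1 < m) (hm1 : m < 1)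
    (hmax : IsMaxOn (bahH β p) (Set.Icc (-1:ℝ) 1) m) : β * (p * m^(p-1)) = myA m := by
  have hloc : IsLocalMax (bahH β p) m := hmax.isLocalMax (Icc_mem_nhds hm0 hm1)
  have h := hloc.hasDerivAt_eq_zero (hasDerivAt_bahH β p hm0 hm1)
  linarith [h]

lemma max_lt_one {p : ℕ} {β m : ℝ} (hβ : 0 ≤ β) (hm0 : 0 < m) (hm : m ∈ Set.Icc (-1:ℝ) 1)
    (hmax : IsMaxOn (bahH β p) (Set.Icc (-1:ℝ) 1) m) : m < 1 := by
  rcases lt_or_eq_of_le hm.2 with h | h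
  · exact h
  exfalso
  obtain ⟨x₀, hx₀0, hx₀1, hC⟩ := exists_myA_large (β * p)
  have hanti : StrictAntiOn (bahH β p) (Set.Icc x₀ 1) := by
    apply strictAntiOn_of_deriv_neg (convex_Icc _ _) ((continuous_bahH β p).continuousOn)
    intro y hy
    rw [interior_Icc] at hy
    obtain ⟨hy1, hy2⟩ := hy
    rw [(hasDerivAt_bahH β p (by linarith) hy2).deriv]
    have hA : myA x₀ < myA y := myA_lt_myA (by linarith) hy1 hy2
    have hpow : y ^ (p-1) ≤ 1 := pow_le_one₀ (by linarith) hy2.le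
    have : β * ((p:ℕ) * y^(p-1)) ≤ β * p := by
      have : (p:ℝ) * y^(p-1) ≤ p := by
        nlinarith [Nat.cast_nonneg (α := ℝ) p]
      nlinarith
    linarith
  have h1m : (1:ℝ) ∈ Set.Icc x₀ 1 := Set.right_mem_Icc.2 hx₀1.le
  have hx₀m : x₀ ∈ Set.Icc x₀ 1 := Set.left_mem_Icc.2 hx₀1.le
  have hlt := hanti hx₀m h1m hx₀1
  have := hmax (Set.mem_Icc.2 ⟨by linarith, hx₀1.le⟩)
  rw [h] at this
  simp only [Set.mem_setOf_eq] at this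
  linarith

lemma not_two_max {p : ℕ} (hp : 2 ≤ p) {β a b : ℝ}
    (ha0 : 0 < a) (hb1 : b < 1) (hab : a < b)
    (hma : IsMaxOn (bahH β p) (Set.Icc (-1:ℝ) 1) a)
    (hmb : IsMaxOn (bahH β p) (Set.Icc (-1:ℝ) 1) b) : False := by
  set q := p - 1 with hqdef
  have hq : 1 ≤ q := by omega
  have hpq : p = q + 1 := by omega
  have ha1 : a < 1 := hab.trans hb1
  have hb0 : 0 < b := ha0.trans hab
  have crita : β * (p * a^(p-1)) = myA a := crit_eq (by linarith) ha1 hma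
  have critb : β * (p * b^(p-1)) = myA b := crit_eq (by linarith) hb1 hmb
  have phia : phiF q a = β * p := by
    unfold phiF
    rw [← crita, ← hqdef]
    field_simp [ha0.ne']
  have phib : phiF q b = β * p := by
    unfold phiF
    rw [← critb, ← hqdef]
    field_simp [hb0.ne']
  -- key : phiF < β p strictly inside (a, b)
  have key : ∀ x ∈ Set.Ioo a b, phiF q x < β * p := by
    by_contra hcon
    push_neg at hcon
    obtain ⟨x, hx, hge⟩ := hcon
    have hx1 : x < 1 := hx.2.trans hb1
    have hx0 : 0 < x := ha0.trans hx.1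
    -- MVT on [a, x]
    obtain ⟨c, hc, hceq⟩ := exists_hasDerivAt_eq_slope (phiF q)
      (fun y => psiF q y / y^(q+1)) hx.1
      (fun y hy => (hasDerivAt_phiF hq (by cases hy; linarith) (by cases hy; linarith)).continuousAt.continuousWithinAt)
      (fun y hy => hasDerivAt_phiF hq (by cases hy; linarith) (by cases hy; linarith))
    have hc0 : 0 < c := ha0.trans hc.1
    have hslope : 0 ≤ psiF q c / c^(q+1) := by
      rw [hceq]
      apply div_nonneg
      · rw [phia]; linarith
      · linarith [hx.1]
    have hψc : 0 ≤ psiF q c := by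
      by_contra hneg
      push_neg at hneg
      have := div_neg_of_neg_of_pos hneg (pow_pos hc0 (q+1))
      linarith
    have hmono : StrictMonoOn (phiF q) (Set.Icc x b) := by
      apply strictMonoOn_of_deriv_pos (convex_Icc _ _)
      · intro y hy
        exact (hasDerivAt_phiF hq (by cases hy; linarith) (by cases hy; linarith)).continuousAt.continuousWithinAt
      · intro y hy
        rw [interior_Icc] at hy
        rw [(hasDerivAt_phiF hq (by cases hy; linarith) (by cases hy; linarith)).deriv]
        apply div_pos
        · exact psiF_pos hq hc0 (by cases hy; cases hc; linarith) (by cases hy; linarith) hψc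
        · exact pow_pos (by cases hy; linarith) _
    have := hmono (Set.left_mem_Icc.2 hx.2.le) (Set.right_mem_Icc.2 hx.2.le) hx.2
    rw [phib] at this
    linarith
  -- bahH strictly increasing on [a, b]
  have hmono : StrictMonoOn (bahH β p) (Set.Icc a b) := by
    apply strictMonoOn_of_deriv_pos (convex_Icc _ _) ((continuous_bahH β p).continuousOn)
    intro y hy
    rw [interior_Icc] at hy
    obtain ⟨hy1, hy2⟩ := hy
    have hy0 : 0 < y := ha0.trans hy1
    rw [(hasDerivAt_bahH β p (by linarith) (by linarith)).deriv]
    have hmyA : myA y = phiF q y * y^q := by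
      unfold phiF
      field_simp
    have hkey := key y ⟨hy1, hy2⟩
    have hyq : (0:ℝ) < y^q := pow_pos hy0 q
    have hppow : (p:ℝ) * y^(p-1) = (p:ℝ) * y^q := by rw [← hqdef]
    rw [hppow, hmyA]
    nlinarith
  have hlt := hmono (Set.left_mem_Icc.2 hab.le) (Set.right_mem_Icc.2 hab.le) hab
  have := hma (Set.mem_Icc.2 ⟨by linarith, hb1.le⟩)
  simp only [Set.mem_setOf_eq] at this
  linarith

lemma bddAbove_image (β : ℝ) (p : ℕ) : BddAbove (bahH β p '' Set.Icc (-1:ℝ) 1) :=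
  (isCompact_Icc.image (continuous_bahH β p)).bddAbove

lemma bahH_zero (β : ℝ) {p : ℕ} (hp : 2 ≤ p) : bahH β p 0 = 0 := by
  simp [bahH, bahI, zero_pow (by omega : p ≠ 0)]

lemma sSup_H_zero (p : ℕ) (hp : 2 ≤ p) : sSup (bahH 0 p '' Set.Icc (-1:ℝ) 1) = 0 := by
  apply le_antisymm
  · apply csSup_le ⟨bahH 0 p 0, Set.mem_image_of_mem _ (by norm_num)⟩
    rintro y ⟨x, hx, rfl⟩
    have := bahI_nonneg hx
    simp only [bahH, zero_mul, zero_sub]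
    linarith
  · have h := le_csSup (bddAbove_image 0 p)
      (Set.mem_image_of_mem (bahH 0 p) (show (0:ℝ) ∈ Set.Icc (-1:ℝ) 1 by norm_num))
    rwa [bahH_zero 0 hp] at h

lemma betaSet_bddAbove (p : ℕ) :
    BddAbove {β : ℝ | 0 ≤ β ∧ sSup (bahH β p '' Set.Icc (-1 : ℝ) 1) = 0} := by
  refine ⟨Real.log 2, fun β hβ => ?_⟩
  obtain ⟨hβ0, hβS⟩ := hβ
  have h1 : bahH β p 1 ≤ sSup (bahH β p '' Set.Icc (-1:ℝ) 1) :=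
    le_csSup (bddAbove_image β p) (Set.mem_image_of_mem _ (by norm_num))
  rw [hβS] at h1
  have : bahH β p 1 = β - Real.log 2 := by simp [bahH, bahI_one]
  linarith [this ▸ h1]

lemma betaStar_nonneg (p : ℕ) (hp : 2 ≤ p) : 0 ≤ betaStar p :=
  le_csSup (betaSet_bddAbove p) ⟨le_refl 0, sSup_H_zero p hp⟩

lemma maxval_pos {p : ℕ} (hp : 2 ≤ p) {β m : ℝ} (hβ : betaStar p < β)
    (hm : m ∈ Set.Icc (-1:ℝ) 1) (hmax : IsMaxOn (bahH β p) (Set.Icc (-1:ℝ) 1) m) :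
    0 < bahH β p m := by
  have h0 : bahH β p 0 ≤ bahH β p m := hmax (by norm_num)
  rw [bahH_zero β hp] at h0
  rcases lt_or_eq_of_le h0 with h | h
  · exact h
  exfalso
  have hS : sSup (bahH β p '' Set.Icc (-1:ℝ) 1) = 0 := by
    apply le_antisymm
    · apply csSup_le ⟨bahH β p m, Set.mem_image_of_mem _ hm⟩
      rintro y ⟨x, hx, rfl⟩
      have := hmax hx
      simp only [Set.mem_setOf_eq] at this
      linarith
    · have h' := le_csSup (bddAbove_image β p)
        (Set.mem_image_of_mem (bahH β p) (show (0:ℝ) ∈ Set.Icc (-1:ℝ) 1 by norm_num))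
      rwa [bahH_zero β hp] at h'
  have hβ0 : 0 ≤ β := (betaStar_nonneg p hp).trans hβ.le
  have : β ≤ betaStar p := le_csSup (betaSet_bddAbove p) ⟨hβ0, hS⟩
  linarith

/-- For `p ≥ 2`, the map `ξ_p(β) = m_*(β,p)` (where, for each `β > β*(p)`, `ξ β` is the
positive global maximizer of `H_{β,p}` on `[−1,1]`) is continuous and strictly increasing
on `(β*(p), ∞)`, and `ξ_p(β) → 1` as `β → ∞`. -/
theorem statement4 (p : ℕ) (hp : 2 ≤ p) (ξ : ℝ → ℝ)
    (hξ : ∀ β ∈ Set.Ioi (betaStar p),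
      0 < ξ β ∧ ξ β ∈ Set.Icc (-1 : ℝ) 1 ∧ IsMaxOn (bahH β p) (Set.Icc (-1 : ℝ) 1) (ξ β)) :
    ContinuousOn ξ (Set.Ioi (betaStar p)) ∧
    StrictMonoOn ξ (Set.Ioi (betaStar p)) ∧
    Tendsto ξ atTop (nhds 1) := by
  refine ⟨?_, ?_, ?_⟩
  · -- Continuity
    intro β0 hβ0
    have hβ0' : betaStar p < β0 := hβ0
    have hβ00 : 0 ≤ β0 := (betaStar_nonneg p hp).trans hβ0'.le
    obtain ⟨hpos0, hmem0, hmax0⟩ := hξ β0 hβ0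
    rw [ContinuousWithinAt]
    apply tendsto_of_subseq_tendsto
    intro ns hns
    have hmemE : ∀ᶠ n in atTop, ns n ∈ Set.Ioi (betaStar p) := hns self_mem_nhdsWithin
    obtain ⟨N, hN⟩ := eventually_atTop.1 hmemE
    have hns0 : Tendsto (fun n => ns (n + N)) atTop (𝓝 β0) :=
      (hns.mono_right nhdsWithin_le_nhds).comp (tendsto_add_atTop_nat N)
    have hxmem : ∀ n, ξ (ns (n + N)) ∈ Set.Icc (-1:ℝ) 1 := fun n =>
      (hξ _ (hN _ (Nat.le_add_left N n))).2.1
    obtain ⟨xs, hxsmem, ms, hms, hmsT⟩ := isCompact_Icc.tendsto_subseq hxmem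
    set u : ℕ → ℝ := fun k => ns (ms k + N) with hu
    have huIoi : ∀ k, u k ∈ Set.Ioi (betaStar p) := fun k => hN _ (Nat.le_add_left N _)
    have huT : Tendsto u atTop (𝓝 β0) := hns0.comp hms.tendsto_atTop
    have hxT : Tendsto (fun k => ξ (u k)) atTop (𝓝 xs) := hmsT
    have hxsmax : IsMaxOn (bahH β0 p) (Set.Icc (-1:ℝ) 1) xs := by
      intro y hy
      simp only [Set.mem_setOf_eq]
      have hL : Tendsto (fun k => bahH (u k) p (ξ (u k))) atTop (𝓝 (bahH β0 p xs)) := by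
        unfold bahH
        exact (huT.mul (hxT.pow p)).sub (continuous_bahI.continuousAt.tendsto.comp hxT)
      have hR : Tendsto (fun k => bahH (u k) p y) atTop (𝓝 (bahH β0 p y)) := by
        unfold bahH
        exact (huT.mul tendsto_const_nhds).sub tendsto_const_nhds
      have hle : ∀ k, bahH (u k) p y ≤ bahH (u k) p (ξ (u k)) := fun k => by
        have := (hξ _ (huIoi k)).2.2 hy
        simpa using this
      exact le_of_tendsto_of_tendsto' hR hL hle
    have hxs0 : 0 ≤ xs :=
      ge_of_tendsto hxT (Eventually.of_forall fun k => ((hξ _ (huIoi k)).1).le)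
    have hxspos : 0 < xs := by
      rcases eq_or_lt_of_le hxs0 with h | h
      · exfalso
        have hv := maxval_pos hp hβ0' hxsmem hxsmax
        rw [← h, bahH_zero β0 hp] at hv
        exact lt_irrefl 0 hv
      · exact h
    have hxseq : xs = ξ β0 := by
      by_contra hne
      rcases lt_or_gt_of_ne hne with h | h
      · exact not_two_max hp hxspos (max_lt_one hβ00 hpos0 hmem0 hmax0) h hxsmax hmax0
      · exact not_two_max hp hpos0 (max_lt_one hβ00 hxspos hxsmem hxsmax) h hmax0 hxsmax
    exact ⟨fun k => ms k + N, hxseq ▸ hxT⟩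
  · -- Strict monotonicity
    intro β1 h1 β2 h2 h12
    obtain ⟨hpos1, hmem1, hmax1⟩ := hξ β1 h1
    obtain ⟨hpos2, hmem2, hmax2⟩ := hξ β2 h2
    have hβ10 : 0 ≤ β1 := (betaStar_nonneg p hp).trans (le_of_lt h1)
    have hβ20 : 0 ≤ β2 := (betaStar_nonneg p hp).trans (le_of_lt h2)
    have hlt1 : ξ β1 < 1 := max_lt_one hβ10 hpos1 hmem1 hmax1
    have hlt2 : ξ β2 < 1 := max_lt_one hβ20 hpos2 hmem2 hmax2
    have e1 := hmax1 hmem2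
    have e2 := hmax2 hmem1
    simp only [Set.mem_setOf_eq] at e1 e2
    have hpow : ξ β1 ^ p ≤ ξ β2 ^ p := by
      unfold bahH at e1 e2
      nlinarith
    have hle : ξ β1 ≤ ξ β2 := le_of_pow_le_pow_left₀ (by omega) hpos2.le hpow
    rcases lt_or_eq_of_le hle with h | h
    · exact h
    · exfalso
      have c1 := crit_eq (show -1 < ξ β1 by linarith) hlt1 hmax1
      have c2 := crit_eq (show -1 < ξ β2 by linarith) hlt2 hmax2
      rw [h] at c1
      have hX : (0:ℝ) < (p:ℝ) * ξ β2 ^ (p-1) := by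
        have : (0:ℝ) < (p:ℝ) := by exact_mod_cast (by omega : 0 < p)
        exact mul_pos this (pow_pos hpos2 _)
      have : β1 = β2 := mul_right_cancel₀ hX.ne' (c1.trans c2.symm)
      exact h12.ne this
  · -- Tendsto atTop
    rw [tendsto_order]
    constructor
    · intro c hc
      rcases lt_or_ge c 0 with hc0 | hc0
      · filter_upwards [eventually_gt_atTop (betaStar p)] with β hβ
        exact hc0.trans (hξ β hβ).1
      · set x₀ : ℝ := (c+1)/2 with hx₀def
        have hx₀c : c < x₀ := by rw [hx₀def]; linarith
        have hx₀1 : x₀ < 1 := by rw [hx₀def]; linarith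
        have hδ : 0 < x₀^p - c^p := sub_pos.2 (pow_lt_pow_left₀ hx₀c hc0 (by omega))
        filter_upwards [eventually_gt_atTop (max (betaStar p) (Real.log 2 / (x₀^p - c^p)))]
          with β hβ
        have hβs : betaStar p < β := (le_max_left _ _).trans_lt hβ
        obtain ⟨hpos, hmem, hmax⟩ := hξ β hβs
        have hβ0 : 0 < β := (betaStar_nonneg p hp).trans_lt hβs
        have hcmp := hmax (show x₀ ∈ Set.Icc (-1:ℝ) 1 by constructor <;> linarith)
        simp only [Set.mem_setOf_eq] at hcmp
        have hI1 : 0 ≤ bahI (ξ β) := bahI_nonneg hmem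
        have hI2 : bahI x₀ ≤ Real.log 2 := bahI_le_log_two ⟨by linarith, hx₀1.le⟩
        have hKβ : Real.log 2 / (x₀^p - c^p) < β := (le_max_right _ _).trans_lt hβ
        have hlog : Real.log 2 < β * (x₀^p - c^p) := (div_lt_iff₀ hδ).1 hKβ
        have hξp : c^p < ξ β ^ p := by
          unfold bahH at hcmp
          have hmul : β * c^p < β * ξ β ^ p := by nlinarith
          exact lt_of_mul_lt_mul_left hmul hβ0.le
        exact lt_of_pow_lt_pow_left₀ p hpos.le hξp
    · intro c hc
      filter_upwards [eventually_gt_atTop (betaStar p)] with β hβ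
      exact ((hξ β hβ).2.1.2).trans_lt hc
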